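/- Suppose Assumptions 1, 2 and 3 hold, let X ∈ 𝒳ⁿ be a dataset, let p ∈ (0, 1/2], let η > 0 be such that 1 − 2ηm + η²K₁² ≥ 0, and let Z be a random vector in ℝ^d with 𝔼‖Z‖^{2p} < ∞. Then for every θ ∈ ℝ^d, 𝔼[(1 + ‖θ − η ∇F(θ, X) + Z − ϑ⋆‖²)^p] ≤ 1 + (1 − 2ηm + η²K₁²)^p ‖θ − ϑ⋆‖^{2p} + (2ηK)^p + 𝔼‖Z‖^{2p}. -/

import Mathlib

open scoped BigOperators RealInnerProductSpace
open MeasureTheory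

lemma rpow_add_le_add_rpow_real {a b p : ℝ} (ha : 0 ≤ a) (hb : 0 ≤ b)
    (hp : 0 ≤ p) (hp1 : p ≤ 1) : (a + b) ^ p ≤ a ^ p + b ^ p := by
  lift a to NNReal using ha
  lift b to NNReal using hb
  have := NNReal.rpow_add_le_add_rpow a b hp hp1
  exact_mod_cast this

lemma sq_rpow_eq_rpow_two_mul {s p : ℝ} (hs : 0 ≤ s) :
    (s ^ 2) ^ p = s ^ (2 * p) := by
  rw [← Real.rpow_natCast s 2, ← Real.rpow_mul hs]
  norm_num

set_option maxHeartbeats 1000000 in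
/-- Under Assumptions 1, 2 and 3, for `p ∈ (0, 1/2]`, step-size `η > 0`
with `1 - 2ηm + η²K₁² ≥ 0`, and a random vector `Z` with `𝔼‖Z‖^{2p} < ∞`, we have
`𝔼[(1 + ‖θ - η∇F(θ,X) + Z - ϑ⋆‖²)^p] ≤ 1 + (1 - 2ηm + η²K₁²)^p ‖θ - ϑ⋆‖^{2p}
  + (2ηK)^p + 𝔼‖Z‖^{2p}`. -/
theorem lyapunov_moment_bound_gd
    {d : ℕ} {H : Type*} [NormedAddCommGroup H] [InnerProductSpace ℝ H]
    (𝒳 : Set H) (f : EuclideanSpace ℝ (Fin d) → H → ℝ)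
    (K₁ K₂ : ℝ) (hK₁ : 0 < K₁) (hK₂ : 0 < K₂)
    (hdiff : ∀ x ∈ 𝒳, Differentiable ℝ (fun θ => f θ x))
    (hA1 : ∀ (θ θ' : EuclideanSpace ℝ (Fin d)), ∀ x ∈ 𝒳, ∀ x' ∈ 𝒳,
      ‖gradient (fun ϑ => f ϑ x) θ - gradient (fun ϑ => f ϑ x') θ'‖ ≤
        K₁ * ‖θ - θ'‖ + K₂ * ‖x - x'‖ * (‖θ‖ + ‖θ'‖ + 1))
    (B m K : ℝ) (hB : 0 < B) (hm : 0 < m) (hK : 0 < K)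
    (hA2a : ∀ x ∈ 𝒳, ‖gradient (fun ϑ => f ϑ x) 0‖ ≤ B)
    (hA2b : ∀ (θ₁ θ₂ : EuclideanSpace ℝ (Fin d)), ∀ x ∈ 𝒳,
      m * ‖θ₁ - θ₂‖ ^ 2 - K ≤
        ⟪gradient (fun ϑ => f ϑ x) θ₁ - gradient (fun ϑ => f ϑ x) θ₂, θ₁ - θ₂⟫)
    (ϑstar : EuclideanSpace ℝ (Fin d))
    (hA3 : ∀ x ∈ 𝒳, gradient (fun ϑ => f ϑ x) ϑstar = 0)
    {n : ℕ} (hn : 0 < n) (X : Fin n → H) (hX : ∀ i, X i ∈ 𝒳)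
    (p : ℝ) (hp0 : 0 < p) (hp1 : p ≤ 1 / 2)
    (η : ℝ) (hη0 : 0 < η) (hη : 0 ≤ 1 - 2 * η * m + η ^ 2 * K₁ ^ 2)
    {Ω : Type*} [MeasurableSpace Ω] (μ : Measure Ω) [IsProbabilityMeasure μ]
    (Z : Ω → EuclideanSpace ℝ (Fin d)) (hZ : Measurable Z)
    (hint : Integrable (fun ω => ‖Z ω‖ ^ (2 * p)) μ)
    (θ : EuclideanSpace ℝ (Fin d)) :
    ∫ ω, (1 + ‖θ - η • ((n : ℝ)⁻¹ • ∑ j : Fin n, gradient (fun ϑ => f ϑ (X j)) θ)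
            + Z ω - ϑstar‖ ^ 2) ^ p ∂μ
      ≤ 1 + (1 - 2 * η * m + η ^ 2 * K₁ ^ 2) ^ p * ‖θ - ϑstar‖ ^ (2 * p)
        + (2 * η * K) ^ p + ∫ ω, ‖Z ω‖ ^ (2 * p) ∂μ := by
  set g : EuclideanSpace ℝ (Fin d) :=
    (n : ℝ)⁻¹ • ∑ j : Fin n, gradient (fun ϑ => f ϑ (X j)) θ with hg
  set v : EuclideanSpace ℝ (Fin d) := θ - ϑstar with hv
  set C : ℝ := 1 - 2 * η * m + η ^ 2 * K₁ ^ 2 with hC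
  have hp1' : p ≤ 1 := by linarith
  have h2p1 : 2 * p ≤ 1 := by linarith
  have hnR : (0 : ℝ) < (n : ℝ) := by exact_mod_cast hn
  -- inner product lower bound
  have hg_inner : m * ‖v‖ ^ 2 - K ≤ ⟪g, v⟫ := by
    have h1 : ∀ j : Fin n, m * ‖v‖ ^ 2 - K ≤ ⟪gradient (fun ϑ => f ϑ (X j)) θ, v⟫ := by
      intro j
      have := hA2b θ ϑstar (X j) (hX j)
      rwa [hA3 (X j) (hX j), sub_zero] at this
    have hsum : (n : ℝ) * (m * ‖v‖ ^ 2 - K) ≤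
        ∑ j : Fin n, ⟪gradient (fun ϑ => f ϑ (X j)) θ, v⟫ := by
      have := Finset.sum_le_sum (fun j (_ : j ∈ Finset.univ) => h1 j)
      rw [Finset.sum_const, Finset.card_univ, Fintype.card_fin, nsmul_eq_mul] at this
      exact this
    have heq : ⟪g, v⟫ = (n : ℝ)⁻¹ * ∑ j : Fin n, ⟪gradient (fun ϑ => f ϑ (X j)) θ, v⟫ := by
      rw [hg, real_inner_smul_left, sum_inner]
    rw [heq]
    calc m * ‖v‖ ^ 2 - K = (n : ℝ)⁻¹ * ((n : ℝ) * (m * ‖v‖ ^ 2 - K)) := by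
          field_simp
      _ ≤ _ := mul_le_mul_of_nonneg_left hsum (by positivity)
  -- gradient norm bound
  have hg_norm : ‖g‖ ≤ K₁ * ‖v‖ := by
    have h1 : ∀ j : Fin n, ‖gradient (fun ϑ => f ϑ (X j)) θ‖ ≤ K₁ * ‖v‖ := by
      intro j
      have := hA1 θ ϑstar (X j) (hX j) (X j) (hX j)
      rw [hA3 (X j) (hX j), sub_zero] at this
      simpa using this
    have hsum : ‖∑ j : Fin n, gradient (fun ϑ => f ϑ (X j)) θ‖ ≤ (n : ℝ) * (K₁ * ‖v‖) := by
      calc ‖∑ j : Fin n, gradient (fun ϑ => f ϑ (X j)) θ‖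
          ≤ ∑ j : Fin n, ‖gradient (fun ϑ => f ϑ (X j)) θ‖ := norm_sum_le _ _
        _ ≤ ∑ _j : Fin n, K₁ * ‖v‖ := Finset.sum_le_sum (fun j _ => h1 j)
        _ = (n : ℝ) * (K₁ * ‖v‖) := by
            simp [Finset.sum_const, Finset.card_univ, nsmul_eq_mul]
    rw [hg, norm_smul]
    have : ‖(n : ℝ)⁻¹‖ = (n : ℝ)⁻¹ := by
      rw [Real.norm_eq_abs, abs_of_nonneg (by positivity)]
    rw [this]
    calc (n : ℝ)⁻¹ * ‖∑ j : Fin n, gradient (fun ϑ => f ϑ (X j)) θ‖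
        ≤ (n : ℝ)⁻¹ * ((n : ℝ) * (K₁ * ‖v‖)) := mul_le_mul_of_nonneg_left hsum (by positivity)
      _ = K₁ * ‖v‖ := by field_simp
  -- deterministic contraction
  have hdet : ‖v - η • g‖ ^ 2 ≤ C * ‖v‖ ^ 2 + 2 * η * K := by
    have hexp : ‖v - η • g‖ ^ 2 = ‖v‖ ^ 2 - 2 * (η * ⟪g, v⟫) + η ^ 2 * ‖g‖ ^ 2 := by
      rw [norm_sub_sq_real, real_inner_smul_right, norm_smul]
      rw [Real.norm_eq_abs, abs_of_nonneg hη0.le, mul_pow, real_inner_comm]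
    rw [hexp, hC]
    nlinarith [hg_inner, hg_norm, norm_nonneg g, norm_nonneg v, sq_nonneg η,
      mul_le_mul_of_nonneg_left hg_norm (mul_nonneg (sq_nonneg η) (norm_nonneg g)),
      sq_nonneg (K₁ * ‖v‖ - ‖g‖)]
  -- pointwise bound
  set D : ℝ := 1 + C ^ p * ‖v‖ ^ (2 * p) + (2 * η * K) ^ p with hD
  have hpt : ∀ ω, (1 + ‖θ - η • g + Z ω - ϑstar‖ ^ 2) ^ p ≤ D + ‖Z ω‖ ^ (2 * p) := by
    intro ω
    have hrw : θ - η • g + Z ω - ϑstar = (v - η • g) + Z ω := by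
      rw [hv]; abel
    rw [hrw]
    set a : EuclideanSpace ℝ (Fin d) := v - η • g with ha
    set z : EuclideanSpace ℝ (Fin d) := Z ω with hz
    set s : ℝ := Real.sqrt (1 + ‖a‖ ^ 2) with hs
    have hs0 : 0 ≤ s := Real.sqrt_nonneg _
    have hs_sq : s ^ 2 = 1 + ‖a‖ ^ 2 := Real.sq_sqrt (by positivity)
    have ha_le_s : ‖a‖ ≤ s := by
      nlinarith [hs_sq, hs0, norm_nonneg a]
    have step1 : 1 + ‖a + z‖ ^ 2 ≤ (s + ‖z‖) ^ 2 := by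
      have h : ‖a + z‖ ≤ ‖a‖ + ‖z‖ := norm_add_le a z
      have h2 : ‖a + z‖ ^ 2 ≤ (‖a‖ + ‖z‖) ^ 2 :=
        pow_le_pow_left₀ (norm_nonneg _) h 2
      have h3 : (‖a‖ + ‖z‖) ^ 2 = ‖a‖ ^ 2 + 2 * ‖a‖ * ‖z‖ + ‖z‖ ^ 2 := by ring
      have h4 : 2 * ‖a‖ * ‖z‖ ≤ 2 * s * ‖z‖ := by
        apply mul_le_mul_of_nonneg_right _ (norm_nonneg z)
        linarith
      have h5 : (s + ‖z‖) ^ 2 = s ^ 2 + 2 * s * ‖z‖ + ‖z‖ ^ 2 := by ring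
      rw [h5, hs_sq]
      linarith
    have step2 : (1 + ‖a + z‖ ^ 2) ^ p ≤ (s + ‖z‖) ^ (2 * p) := by
      calc (1 + ‖a + z‖ ^ 2) ^ p ≤ ((s + ‖z‖) ^ 2) ^ p :=
            Real.rpow_le_rpow (by positivity) step1 hp0.le
        _ = (s + ‖z‖) ^ (2 * p) := sq_rpow_eq_rpow_two_mul (by positivity)
    have step3 : (s + ‖z‖) ^ (2 * p) ≤ s ^ (2 * p) + ‖z‖ ^ (2 * p) :=
      rpow_add_le_add_rpow_real hs0 (norm_nonneg z) (by linarith) h2p1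
    have step4 : s ^ (2 * p) = (1 + ‖a‖ ^ 2) ^ p := by
      rw [← sq_rpow_eq_rpow_two_mul hs0, hs_sq]
    have step5 : (1 + ‖a‖ ^ 2) ^ p ≤ D := by
      calc (1 + ‖a‖ ^ 2) ^ p ≤ (1 + (C * ‖v‖ ^ 2 + 2 * η * K)) ^ p := by
            apply Real.rpow_le_rpow (by positivity) _ hp0.le
            have := hdet
            linarith
        _ ≤ 1 ^ p + (C * ‖v‖ ^ 2 + 2 * η * K) ^ p := by
            apply rpow_add_le_add_rpow_real zero_le_one _ hp0.le hp1'
            nlinarith [sq_nonneg ‖v‖, hη0.le, hK.le, hη, norm_nonneg v]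
        _ ≤ 1 ^ p + ((C * ‖v‖ ^ 2) ^ p + (2 * η * K) ^ p) := by
            have : (C * ‖v‖ ^ 2 + 2 * η * K) ^ p ≤ (C * ‖v‖ ^ 2) ^ p + (2 * η * K) ^ p :=
              rpow_add_le_add_rpow_real (by positivity) (by positivity) hp0.le hp1'
            linarith
        _ = D := by
            rw [Real.one_rpow, hD, Real.mul_rpow hη (by positivity),
              sq_rpow_eq_rpow_two_mul (norm_nonneg v)]
            ring
    calc (1 + ‖a + z‖ ^ 2) ^ p ≤ s ^ (2 * p) + ‖z‖ ^ (2 * p) := le_trans step2 step3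
      _ ≤ D + ‖z‖ ^ (2 * p) := by rw [step4]; linarith [step5]
  -- integrate
  have hGint : Integrable (fun ω => D + ‖Z ω‖ ^ (2 * p)) μ :=
    (integrable_const D).add hint
  have hmono : ∫ ω, (1 + ‖θ - η • g + Z ω - ϑstar‖ ^ 2) ^ p ∂μ
      ≤ ∫ ω, (D + ‖Z ω‖ ^ (2 * p)) ∂μ := by
    apply integral_mono_of_nonneg
    · filter_upwards with ω
      positivity
    · exact hGint
    · filter_upwards with ω using hpt ω
  have hRHS : ∫ ω, (D + ‖Z ω‖ ^ (2 * p)) ∂μ = D + ∫ ω, ‖Z ω‖ ^ (2 * p) ∂μ := by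
    rw [integral_add (integrable_const D) hint, integral_const]
    simp
  rw [hRHS] at hmono
  calc ∫ ω, (1 + ‖θ - η • g + Z ω - ϑstar‖ ^ 2) ^ p ∂μ
      ≤ D + ∫ ω, ‖Z ω‖ ^ (2 * p) ∂μ := hmono
    _ = 1 + C ^ p * ‖v‖ ^ (2 * p) + (2 * η * K) ^ p + ∫ ω, ‖Z ω‖ ^ (2 * p) ∂μ := by
        rw [hD]
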